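/- Let n ≥ 2, a ∈ ℝⁿ, D = ℝⁿ∖{a}, x ∈ D, and t > 0 with t|x−a| < 1. Then B_j(x, r) ⊂ B_c(x, t) ⊂ B_j(x, R), where r = log(1 + t|x−a|) and R = log(1/(1 − t|x−a|)). -/

import Mathlib

open Metric Set

/-- Euclidean `n`-space. -/
abbrev E (n : ℕ) := EuclideanSpace ℝ (Fin n)

/-- **Inclusion of Cassinian balls between `j`-metric balls in punctured space.**
Let `D = ℝⁿ∖{a}`, `x ∈ D`, `t > 0` with `t|x-a| < 1`.  Then
`B_j(x,r) ⊆ B_c(x,t) ⊆ B_j(x,R)` with `r = log(1 + t|x-a|)` and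
`R = log(1/(1 - t|x-a|))`; here `c_D(x,y) = |x-y|/(|x-a||y-a|)` and
`j_D(x,y) = log(1 + |x-y|/min(|x-a|, |y-a|))`. -/
theorem jBall_subset_cassinianBall_subset_punctured (n : ℕ) (hn : 2 ≤ n)
    (a x : E n) (hx : x ≠ a) (t : ℝ) (ht : 0 < t) (ht1 : t * dist x a < 1) :
    {y : E n | y ≠ a ∧
          Real.log (1 + dist x y / min (dist x a) (dist y a))
            < Real.log (1 + t * dist x a)}
        ⊆ {y : E n | y ≠ a ∧ dist x y / (dist x a * dist y a) < t} ∧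
      {y : E n | y ≠ a ∧ dist x y / (dist x a * dist y a) < t}
        ⊆ {y : E n | y ≠ a ∧
          Real.log (1 + dist x y / min (dist x a) (dist y a))
            < Real.log (1 / (1 - t * dist x a))} := by
  have hd : 0 < dist x a := dist_pos.mpr hx
  constructor
  · rintro y ⟨hy, hlog⟩
    have hdy : 0 < dist y a := dist_pos.mpr hy
    have hm : 0 < min (dist x a) (dist y a) := lt_min hd hdy
    refine ⟨hy, ?_⟩
    have h1 : 1 + dist x y / min (dist x a) (dist y a) < 1 + t * dist x a :=
      (Real.log_lt_log_iff (by positivity) (by positivity)).mp hlog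
    have h2 : dist x y / min (dist x a) (dist y a) < t * dist x a := by linarith
    have h3 : dist x y < t * dist x a * min (dist x a) (dist y a) :=
      (div_lt_iff₀ hm).mp h2
    rw [div_lt_iff₀ (by positivity)]
    have h4 : min (dist x a) (dist y a) ≤ dist y a := min_le_right _ _
    nlinarith [mul_pos ht hd]
  · rintro y ⟨hy, hc⟩
    have hdy : 0 < dist y a := dist_pos.mpr hy
    have hm : 0 < min (dist x a) (dist y a) := lt_min hd hdy
    refine ⟨hy, ?_⟩
    have h1td : 0 < 1 - t * dist x a := by linarith
    have hs : dist x y < t * (dist x a * dist y a) := (div_lt_iff₀ (by positivity)).mp hc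
    have htri : dist y a ≤ dist x y + dist x a := by
      rw [dist_comm x y]; exact dist_triangle y x a
    have hsn : (0:ℝ) ≤ dist x y := dist_nonneg
    have key : dist x y * (1 - t * dist x a)
        < t * dist x a * min (dist x a) (dist y a) := by
      rcases min_cases (dist x a) (dist y a) with ⟨hmin, hle⟩ | ⟨hmin, hle⟩
      · rw [hmin]
        nlinarith [mul_le_mul_of_nonneg_left htri (le_of_lt (mul_pos ht hd))]
      · rw [hmin]
        nlinarith [mul_nonneg (mul_nonneg ht.le hd.le) hsn]
    have hq : dist x y / min (dist x a) (dist y a)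
        < t * dist x a / (1 - t * dist x a) :=
      (div_lt_div_iff₀ hm h1td).mpr key
    have heq : (1:ℝ) / (1 - t * dist x a)
        = 1 + t * dist x a / (1 - t * dist x a) := by field_simp; ring
    have hlt : 1 + dist x y / min (dist x a) (dist y a)
        < 1 / (1 - t * dist x a) := by rw [heq]; linarith
    exact Real.log_lt_log (by positivity) hlt
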